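/- arXiv:1404.4209 — 2 statements merged into one kernel-verified Lean document; each statement's English description precedes it below -/
import Mathlib

section
/- Let p be a prime, let F be a complete subfield of ℂ_p, let r > 0, and let f be a function analytic on the closed ball {x ∈ F : |x|_p ≤ r}. Let s, t be real numbers with 0 < s ≤ t ≤ r. If f has at least k zeros (counted with multiplicity) in the closed ball {x ∈ F : |x|_p ≤ s}, in the sense that f(z) = (z − a₁)⋯(z − a_k)·g(z) for some a₁, …, a_k ∈ F with |a_i|_p ≤ s and some function g analytic on the closed ball {x ∈ F : |x|_p ≤ r}, then |f|_s ≤ (s/t)^k · |f|_t. -/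
/-!
STATEMENT 0 (Lemma 3.1 of the paper).

We model the completion `ℂ_p` of an algebraic closure of `ℚ_p` by an arbitrary
algebraically closed, complete, nonarchimedean normed field `Cp` whose norm
satisfies `‖p‖ = p⁻¹` (of which `ℂ_p` is an instance), and a complete subfield
`F` of `ℂ_p` by a closed subfield `K` of `Cp`.

A function analytic on the closed ball of radius `r` in `F` is given by its
coefficient sequence `a : ℕ → Cp` (with values in `K`) satisfying
`‖a n‖ * r ^ n → 0`; its value at `z` is `∑' n, a n * z ^ n` and its Gauss norm
at radius `r` is `⨆ n, ‖a n‖ * r ^ n`.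
-/

open Filter

/-- The Gauss norm `|f|_r = sup_n ‖a n‖ * rⁿ` of the analytic function with
coefficient sequence `a`. -/
noncomputable def gaussNorm {Cp : Type*} [NormedField Cp] (a : ℕ → Cp) (r : ℝ) : ℝ :=
  ⨆ n, ‖a n‖ * r ^ n

section GaussAux

open IsUltrametricDist

set_option linter.unusedSectionVars false

variable {Cp : Type*} [NontriviallyNormedField Cp] [IsUltrametricDist Cp] [CompleteSpace Cp]

lemma decay_mono {u : ℕ → Cp} {r ρ : ℝ} (hρ : 0 ≤ ρ) (hρr : ρ ≤ r)
    (hu : Tendsto (fun n => ‖u n‖ * r ^ n) atTop (nhds 0)) :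
    Tendsto (fun n => ‖u n‖ * ρ ^ n) atTop (nhds 0) := by
  refine squeeze_zero (fun n => by positivity) (fun n => ?_) hu
  exact mul_le_mul_of_nonneg_left (pow_le_pow_left₀ hρ hρr n) (norm_nonneg _)

lemma le_gauss {u : ℕ → Cp} {ρ : ℝ}
    (hu : Tendsto (fun n => ‖u n‖ * ρ ^ n) atTop (nhds 0)) (n : ℕ) :
    ‖u n‖ * ρ ^ n ≤ gaussNorm u ρ :=
  le_ciSup hu.bddAbove_range n

lemma gauss_mono {u : ℕ → Cp} {ρ τ : ℝ} (hρ : 0 ≤ ρ) (hρτ : ρ ≤ τ)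
    (hu : Tendsto (fun n => ‖u n‖ * τ ^ n) atTop (nhds 0)) :
    gaussNorm u ρ ≤ gaussNorm u τ :=
  ciSup_le fun n => le_trans
    (mul_le_mul_of_nonneg_left (pow_le_pow_left₀ hρ hρτ n) (norm_nonneg _)) (le_gauss hu n)

lemma summable_of_decay {u : ℕ → Cp} {r : ℝ} {z : Cp}
    (hu : Tendsto (fun n => ‖u n‖ * r ^ n) atTop (nhds 0)) (hz : ‖z‖ ≤ r) :
    Summable (fun n => u n * z ^ n) := by
  refine NonarchimedeanAddGroup.summable_of_tendsto_cofinite_zero ?_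
  rw [Nat.cofinite_eq_atTop, tendsto_zero_iff_norm_tendsto_zero]
  refine squeeze_zero (fun n => norm_nonneg _) (fun n => ?_) hu
  rw [norm_mul, norm_pow]
  exact mul_le_mul_of_nonneg_left (pow_le_pow_left₀ (norm_nonneg _) hz n) (norm_nonneg _)

lemma tsum_shift {u : ℕ → Cp} (m : ℕ) (h0 : ∀ n < m, u n = 0) (z : Cp) :
    ∑' n, u n * z ^ n = z ^ m * ∑' j, u (m + j) * z ^ j := by
  have hinj : Function.Injective (fun j : ℕ => m + j) := add_right_injective m
  have hsupp : Function.support (fun n => u n * z ^ n) ⊆ Set.range (fun j : ℕ => m + j) := by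
    intro n hn
    by_contra hc
    have hnm : n < m := by
      simp only [Set.mem_range, not_exists] at hc
      by_contra h'
      exact hc (n - m) (by omega)
    simp [h0 n hnm] at hn
  rw [← Function.Injective.tsum_eq hinj hsupp, ← tsum_mul_left]
  exact tsum_congr fun j => by rw [pow_add]; ring

/-- Uniqueness of coefficients: an analytic function on the closed ball of radius `r` that
vanishes identically on the points of a subfield `K` (in a field where `‖p‖ = p⁻¹`, so that
`K` contains points of arbitrarily small positive norm) has all coefficients zero. -/
lemma uniq (p : ℕ) [Fact p.Prime] (hpCp : ‖(p : Cp)‖ = (p : ℝ)⁻¹)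
    (K : Subfield Cp) {r : ℝ} (hr : 0 < r) {u : ℕ → Cp}
    (hu : Tendsto (fun n => ‖u n‖ * r ^ n) atTop (nhds 0))
    (hvan : ∀ z ∈ K, ‖z‖ ≤ r → ∑' n, u n * z ^ n = 0) (n : ℕ) : u n = 0 := by
  induction n using Nat.strong_induction_on with
  | _ n ih =>
  set r' : ℝ := min r 1 with hr'def
  have hr'0 : 0 < r' := lt_min hr one_pos
  have hr'r : r' ≤ r := min_le_left _ _
  have hu' : Tendsto (fun m => ‖u m‖ * r' ^ m) atTop (nhds 0) := decay_mono hr'0.le hr'r hu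
  have hbdd : BddAbove (Set.range fun m => ‖u m‖ * r' ^ m) := hu'.bddAbove_range
  set S : ℝ := gaussNorm u r' with hSdef
  have hS0 : 0 ≤ S := Real.iSup_nonneg fun m => by positivity
  set C : ℝ := S / r' ^ (n + 1) with hCdef
  have hC0 : 0 ≤ C := div_nonneg hS0 (by positivity)
  have htail : Tendsto (fun j => ‖u (n + j)‖ * r' ^ j) atTop (nhds 0) := by
    have h1 : Tendsto (fun j : ℕ => n + j) atTop atTop :=
      tendsto_atTop_atTop.mpr fun b => ⟨b, fun a ha => by omega⟩
    have h2 : Tendsto (fun j => (‖u (n + j)‖ * r' ^ (n + j)) / r' ^ n) atTop (nhds 0) := by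
      simpa using (hu'.comp h1).div_const (r' ^ n)
    refine h2.congr fun j => ?_
    rw [pow_add]
    field_simp
  have key : ∀ z : Cp, z ∈ K → 0 < ‖z‖ → ‖z‖ ≤ r' → ‖u n‖ ≤ C * ‖z‖ := by
    intro z hzK hz0 hzr
    have hz : z ≠ 0 := by simpa using hz0.ne'
    have hv : Summable fun j => u (n + j) * z ^ j := by
      refine NonarchimedeanAddGroup.summable_of_tendsto_cofinite_zero ?_
      rw [Nat.cofinite_eq_atTop, tendsto_zero_iff_norm_tendsto_zero]
      refine squeeze_zero (fun j => norm_nonneg _) (fun j => ?_) htail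
      rw [norm_mul, norm_pow]
      exact mul_le_mul_of_nonneg_left (pow_le_pow_left₀ (norm_nonneg _) hzr j) (norm_nonneg _)
    have hzero : ∑' j, u (n + j) * z ^ j = 0 := by
      have h0 := hvan z hzK (hzr.trans hr'r)
      rw [tsum_shift n (fun m hm => ih m hm) z] at h0
      rcases mul_eq_zero.mp h0 with h | h
      · exact absurd h (pow_ne_zero n hz)
      · exact h
    have hsplit := Summable.tsum_eq_zero_add hv
    rw [hzero] at hsplit
    simp only [pow_zero, mul_one, add_zero] at hsplit
    have hun := eq_neg_of_add_eq_zero_left hsplit.symm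
    rw [hun, norm_neg]
    refine norm_tsum_le_of_forall_le_of_nonneg (by positivity) fun j => ?_
    rw [norm_mul, norm_pow, pow_succ]
    have h1 : ‖u (n + (j + 1))‖ * ‖z‖ ^ j ≤ C := by
      have h2 : ‖u (n + (j + 1))‖ * ‖z‖ ^ j ≤ ‖u (n + (j + 1))‖ * r' ^ j :=
        mul_le_mul_of_nonneg_left (pow_le_pow_left₀ (norm_nonneg _) hzr j) (norm_nonneg _)
      refine h2.trans ?_
      rw [hCdef, le_div_iff₀ (by positivity)]
      calc ‖u (n + (j + 1))‖ * r' ^ j * r' ^ (n + 1)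
          = ‖u (n + (j + 1))‖ * r' ^ (n + (j + 1)) := by ring
        _ ≤ S := le_ciSup hbdd (n + (j + 1))
    calc ‖u (n + (j + 1))‖ * (‖z‖ ^ j * ‖z‖) = (‖u (n + (j + 1))‖ * ‖z‖ ^ j) * ‖z‖ := by ring
      _ ≤ C * ‖z‖ := mul_le_mul_of_nonneg_right h1 hz0.le
  have hp1 : (1 : ℝ) < p := by exact_mod_cast (Fact.out : p.Prime).one_lt
  have hpi0 : 0 < (p : ℝ)⁻¹ := by positivity
  have hpi1 : (p : ℝ)⁻¹ < 1 := inv_lt_one_of_one_lt₀ hp1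
  have hgeo : Tendsto (fun M : ℕ => ((p : ℝ)⁻¹) ^ M) atTop (nhds 0) :=
    tendsto_pow_atTop_nhds_zero_of_lt_one hpi0.le hpi1
  have hev : ∀ᶠ M : ℕ in atTop, ‖u n‖ ≤ C * ((p : ℝ)⁻¹) ^ M := by
    filter_upwards [hgeo.eventually_le_const hr'0] with M hM
    have := key ((p : Cp) ^ M) (pow_mem (natCast_mem K p) M) (by rw [norm_pow, hpCp]; positivity)
      (by rw [norm_pow, hpCp]; exact hM)
    rwa [norm_pow, hpCp] at this
  have hle : ‖u n‖ ≤ 0 := ge_of_tendsto (by simpa using hgeo.const_mul C) hev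
  simpa using le_antisymm hle (norm_nonneg _)

/-- coefficients of `(z - b) * g` where `g` has coefficients `c`. -/
noncomputable def mulLin (b : Cp) (c : ℕ → Cp) : ℕ → Cp :=
  fun n => (if n = 0 then 0 else c (n - 1)) - b * c n

lemma mulLin_zero (b : Cp) (c : ℕ → Cp) : mulLin b c 0 = -(b * c 0) := by
  simp [mulLin]

lemma mulLin_succ (b : Cp) (c : ℕ → Cp) (m : ℕ) :
    mulLin b c (m + 1) = c m - b * c (m + 1) := by
  simp [mulLin]

lemma norm_sub_le_max' (x y : Cp) : ‖x - y‖ ≤ max ‖x‖ ‖y‖ := by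
  rw [sub_eq_add_neg]
  simpa using norm_add_le_max x (-y)

lemma mulLin_norm_le {b : Cp} {c : ℕ → Cp} {ρ : ℝ} (hρ : 0 < ρ) (hb : ‖b‖ ≤ ρ) (n : ℕ) :
    ‖mulLin b c n‖ * ρ ^ n ≤
      ρ * max (‖c (n - 1)‖ * ρ ^ (n - 1)) (‖c n‖ * ρ ^ n) := by
  rcases n with _ | m
  · rw [mulLin_zero, norm_neg, norm_mul, pow_zero, mul_one]
    have h0 : ‖b‖ * ‖c 0‖ ≤ ρ * (‖c 0‖ * 1) := by
      rw [mul_one]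
      exact mul_le_mul_of_nonneg_right hb (norm_nonneg _)
    exact h0.trans (mul_le_mul_of_nonneg_left (le_max_right _ _) hρ.le)
  · rw [mulLin_succ]
    have h1 : ‖c m - b * c (m + 1)‖ ≤ max ‖c m‖ (‖b‖ * ‖c (m + 1)‖) := by
      simpa [norm_mul] using norm_sub_le_max' (c m) (b * c (m + 1))
    calc ‖c m - b * c (m + 1)‖ * ρ ^ (m + 1)
        ≤ max ‖c m‖ (‖b‖ * ‖c (m + 1)‖) * ρ ^ (m + 1) :=
          mul_le_mul_of_nonneg_right h1 (by positivity)
      _ = max (‖c m‖ * ρ ^ (m + 1)) (‖b‖ * ‖c (m + 1)‖ * ρ ^ (m + 1)) :=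
          max_mul_of_nonneg _ _ (by positivity)
      _ ≤ ρ * max (‖c (m + 1 - 1)‖ * ρ ^ (m + 1 - 1)) (‖c (m + 1)‖ * ρ ^ (m + 1)) := by
          rw [mul_max_of_nonneg _ _ hρ.le]
          refine max_le_max ?_ ?_
          · simp only [Nat.add_sub_cancel]
            rw [pow_succ]; ring_nf; exact le_refl _
          · calc ‖b‖ * ‖c (m + 1)‖ * ρ ^ (m + 1)
                = ‖b‖ * (‖c (m + 1)‖ * ρ ^ (m + 1)) := by ring
              _ ≤ ρ * (‖c (m + 1)‖ * ρ ^ (m + 1)) :=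
                  mul_le_mul_of_nonneg_right hb (by positivity)

lemma mulLin_decay {b : Cp} {c : ℕ → Cp} {r : ℝ} (hr : 0 < r) (hb : ‖b‖ ≤ r)
    (hc : Tendsto (fun n => ‖c n‖ * r ^ n) atTop (nhds 0)) :
    Tendsto (fun n => ‖mulLin b c n‖ * r ^ n) atTop (nhds 0) := by
  have h1 : Tendsto (fun n : ℕ => ‖c (n - 1)‖ * r ^ (n - 1)) atTop (nhds 0) :=
    hc.comp (tendsto_sub_atTop_nat 1)
  have h2 : Tendsto (fun n : ℕ => r * max (‖c (n - 1)‖ * r ^ (n - 1)) (‖c n‖ * r ^ n))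
      atTop (nhds 0) := by
    simpa using (h1.max hc).const_mul r
  exact squeeze_zero (fun n => by positivity) (fun n => mulLin_norm_le hr hb n) h2

lemma mulLin_eval (b : Cp) {c : ℕ → Cp} {r : ℝ}
    (hc : Tendsto (fun n => ‖c n‖ * r ^ n) atTop (nhds 0)) {z : Cp} (hz : ‖z‖ ≤ r) :
    ∑' n, mulLin b c n * z ^ n = (z - b) * ∑' n, c n * z ^ n := by
  have hsum : Summable fun n => c n * z ^ n := summable_of_decay hc hz
  set u : ℕ → Cp := fun n => if n = 0 then 0 else c (n - 1) with hu
  have hrange : ∀ x ∉ Set.range Nat.succ, u x * z ^ x = 0 := by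
    intro x hx
    have hx0 : x = 0 := by
      rcases x with _ | m
      · rfl
      · exact absurd ⟨m, rfl⟩ hx
    simp [hx0, hu]
  have husum : Summable fun n => u n * z ^ n := by
    rw [← Function.Injective.summable_iff Nat.succ_injective hrange]
    refine ((hsum.mul_left z).congr fun m => ?_)
    show z * (c m * z ^ m) = u (Nat.succ m) * z ^ (Nat.succ m)
    simp only [hu, Nat.succ_ne_zero, if_false, Nat.succ_sub_one]
    rw [pow_succ]
    ring
  have h1 : ∑' n, u n * z ^ n = z * ∑' n, c n * z ^ n := by
    rw [tsum_shift 1 (by intro n hn; interval_cases n; simp [hu]) z]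
    rw [pow_one]
    congr 1
    refine tsum_congr fun j => ?_
    simp only [hu]
    rw [if_neg (by omega), Nat.add_sub_cancel_left]
  calc ∑' n, mulLin b c n * z ^ n
      = ∑' n, (u n * z ^ n - b * (c n * z ^ n)) := by
        refine tsum_congr fun n => ?_
        simp only [mulLin, hu]
        ring
    _ = (∑' n, u n * z ^ n) - ∑' n, b * (c n * z ^ n) := Summable.tsum_sub husum (hsum.mul_left b)
    _ = z * (∑' n, c n * z ^ n) - b * ∑' n, c n * z ^ n := by rw [h1, tsum_mul_left]
    _ = (z - b) * ∑' n, c n * z ^ n := by ring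

lemma mulLin_gauss_le {b : Cp} {c : ℕ → Cp} {ρ : ℝ} (hρ : 0 < ρ) (hb : ‖b‖ ≤ ρ)
    (hc : Tendsto (fun n => ‖c n‖ * ρ ^ n) atTop (nhds 0)) :
    gaussNorm (mulLin b c) ρ ≤ ρ * gaussNorm c ρ :=
  ciSup_le fun n => (mulLin_norm_le hρ hb n).trans
    (mul_le_mul_of_nonneg_left (max_le (le_gauss hc _) (le_gauss hc _)) hρ.le)

lemma mulLin_gauss_ge {b : Cp} {c : ℕ → Cp} {t : ℝ} (ht : 0 < t) (hb : ‖b‖ ≤ t)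
    (hc : Tendsto (fun n => ‖c n‖ * t ^ n) atTop (nhds 0))
    (hT : Tendsto (fun n => ‖mulLin b c n‖ * t ^ n) atTop (nhds 0)) :
    t * gaussNorm c t ≤ gaussNorm (mulLin b c) t := by
  classical
  set S := gaussNorm c t with hSdef
  rcases le_or_gt S 0 with hS0 | hSpos
  · refine le_trans (mul_nonpos_of_nonneg_of_nonpos ht.le hS0) ?_
    exact Real.iSup_nonneg fun n => by positivity
  obtain ⟨N, hN⟩ := eventually_atTop.mp (hc.eventually_le_const (half_pos hSpos))
  have hne : (Finset.range (N + 1)).Nonempty := ⟨0, by simp⟩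
  obtain ⟨n₁, hn₁mem, hn₁⟩ :=
    Finset.exists_mem_eq_sup' hne (fun n => ‖c n‖ * t ^ n)
  have hn₁N : n₁ ≤ N := Nat.lt_succ_iff.mp (Finset.mem_range.mp hn₁mem)
  have hSle : S ≤ max ((Finset.range (N + 1)).sup' hne fun n => ‖c n‖ * t ^ n) (S / 2) := by
    refine ciSup_le fun n => ?_
    rcases le_or_gt n N with h | h
    · exact le_max_of_le_left (Finset.le_sup' (fun n => ‖c n‖ * t ^ n)
        (Finset.mem_range.mpr (Nat.lt_succ_iff.mpr h)))
    · exact le_max_of_le_right (hN n (by omega))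
  have hAn₁ : S ≤ ‖c n₁‖ * t ^ n₁ := by
    rcases le_max_iff.mp hSle with h | h
    · rwa [hn₁] at h
    · linarith
  set P : ℕ → Prop := fun n => S ≤ ‖c n‖ * t ^ n with hP
  set n₀ := Nat.findGreatest P N with hn₀def
  have hPn₀ : P n₀ := Nat.findGreatest_spec (P := P) hn₁N hAn₁
  have hmax : ∀ m, n₀ < m → ‖c m‖ * t ^ m < S := by
    intro m hm
    rcases le_or_gt m N with h | h
    · have := Nat.findGreatest_is_greatest (P := P) hm h
      simpa [hP, not_le] using this
    · exact lt_of_le_of_lt (hN m h.le) (by linarith)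
  have hterm : ‖c n₀‖ * t ^ n₀ = S := le_antisymm (le_gauss hc n₀) hPn₀
  by_contra hcon
  push_neg at hcon
  have hTbdd := hT.bddAbove_range
  have h1 : ‖mulLin b c (n₀ + 1)‖ * t ^ (n₀ + 1) < ‖c n₀‖ * t ^ (n₀ + 1) := by
    calc ‖mulLin b c (n₀ + 1)‖ * t ^ (n₀ + 1) ≤ gaussNorm (mulLin b c) t :=
          le_ciSup hTbdd (n₀ + 1)
      _ < t * S := hcon
      _ = ‖c n₀‖ * t ^ (n₀ + 1) := by rw [← hterm, pow_succ]; ring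
  have h2 : ‖mulLin b c (n₀ + 1)‖ < ‖c n₀‖ :=
    lt_of_mul_lt_mul_right h1 (by positivity)
  have h3 : ‖c n₀‖ ≤ max ‖mulLin b c (n₀ + 1)‖ ‖b * c (n₀ + 1)‖ := by
    have h : c n₀ = mulLin b c (n₀ + 1) + b * c (n₀ + 1) := by
      rw [mulLin_succ]; ring
    rw [h]
    exact IsUltrametricDist.norm_add_le_max _ _
  have h4 : ‖c n₀‖ ≤ ‖b‖ * ‖c (n₀ + 1)‖ := by
    rcases le_max_iff.mp h3 with h | h
    · exact absurd h (not_le.mpr h2)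
    · rwa [norm_mul] at h
  have h5 : S ≤ ‖c (n₀ + 1)‖ * t ^ (n₀ + 1) := by
    calc S = ‖c n₀‖ * t ^ n₀ := hterm.symm
      _ ≤ (‖b‖ * ‖c (n₀ + 1)‖) * t ^ n₀ := mul_le_mul_of_nonneg_right h4 (by positivity)
      _ ≤ (t * ‖c (n₀ + 1)‖) * t ^ n₀ :=
          mul_le_mul_of_nonneg_right (mul_le_mul_of_nonneg_right hb (norm_nonneg _))
            (by positivity)
      _ = ‖c (n₀ + 1)‖ * t ^ (n₀ + 1) := by rw [pow_succ]; ring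
  exact absurd h5 (not_le.mpr (hmax _ (Nat.lt_succ_self n₀)))

lemma product_coeffs {r s t : ℝ} (hr : 0 < r) (hs : 0 < s) (hst : s ≤ t) (htr : t ≤ r)
    {c : ℕ → Cp} (hc : Tendsto (fun n => ‖c n‖ * r ^ n) atTop (nhds 0)) :
    ∀ (k : ℕ) (b : Fin k → Cp), (∀ i, ‖b i‖ ≤ s) →
    ∃ d : ℕ → Cp,
      Tendsto (fun n => ‖d n‖ * r ^ n) atTop (nhds 0) ∧
      (∀ z : Cp, ‖z‖ ≤ r → ∑' n, d n * z ^ n = (∏ i, (z - b i)) * ∑' n, c n * z ^ n) ∧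
      gaussNorm d s ≤ s ^ k * gaussNorm c s ∧
      t ^ k * gaussNorm c t ≤ gaussNorm d t := by
  intro k
  induction k with
  | zero => exact fun b hb => ⟨c, hc, fun z hz => by simp, by simp, by simp⟩
  | succ k ih =>
    intro b hb
    obtain ⟨d, hd, hdeval, hds, hdt⟩ := ih (fun i => b i.succ) (fun i => hb i.succ)
    have ht0 : 0 < t := lt_of_lt_of_le hs hst
    have hb0s : ‖b 0‖ ≤ s := hb 0
    have hb0r : ‖b 0‖ ≤ r := le_trans (hb 0) (hst.trans htr)
    refine ⟨mulLin (b 0) d, mulLin_decay hr hb0r hd, ?_, ?_, ?_⟩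
    · intro z hz
      rw [mulLin_eval (b 0) hd hz, hdeval z hz, Fin.prod_univ_succ]
      ring
    · have h1 : gaussNorm (mulLin (b 0) d) s ≤ s * gaussNorm d s :=
        mulLin_gauss_le hs hb0s (decay_mono hs.le (hst.trans htr) hd)
      calc gaussNorm (mulLin (b 0) d) s ≤ s * gaussNorm d s := h1
        _ ≤ s * (s ^ k * gaussNorm c s) := mul_le_mul_of_nonneg_left hds hs.le
        _ = s ^ (k + 1) * gaussNorm c s := by ring
    · have hdt' := decay_mono ht0.le htr hd
      have h2 : t * gaussNorm d t ≤ gaussNorm (mulLin (b 0) d) t :=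
        mulLin_gauss_ge ht0 (hb0s.trans hst) hdt'
          (decay_mono ht0.le htr (mulLin_decay hr hb0r hd))
      calc t ^ (k + 1) * gaussNorm c t = t * (t ^ k * gaussNorm c t) := by ring
        _ ≤ t * gaussNorm d t := mul_le_mul_of_nonneg_left hdt ht0.le
        _ ≤ _ := h2

end GaussAux

theorem statement0
    -- `Cp` is a model of `ℂ_p`:
    (p : ℕ) [Fact p.Prime] (Cp : Type*) [NontriviallyNormedField Cp]
    [IsUltrametricDist Cp] [CompleteSpace Cp] [IsAlgClosed Cp]
    (hpCp : ‖(p : Cp)‖ = (p : ℝ)⁻¹)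
    -- `K` is a complete (i.e. closed) subfield `F` of `ℂ_p`:
    (K : Subfield Cp) (hK : IsClosed (K : Set Cp))
    -- the radii:
    (r s t : ℝ) (hr : 0 < r) (hs : 0 < s) (hst : s ≤ t) (htr : t ≤ r)
    -- `f` is analytic on the closed ball of radius `r` in `F`, with
    -- coefficient sequence `a`:
    (a : ℕ → Cp) (haK : ∀ n, a n ∈ K)
    (ha : Tendsto (fun n => ‖a n‖ * r ^ n) atTop (nhds 0))
    -- `g` is analytic on the closed ball of radius `r` in `F`, with
    -- coefficient sequence `c`:
    (c : ℕ → Cp) (hcK : ∀ n, c n ∈ K)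
    (hc : Tendsto (fun n => ‖c n‖ * r ^ n) atTop (nhds 0))
    -- `f` has (at least) `k` zeros `b 0, …, b (k-1)` (with multiplicity) in the
    -- closed ball of radius `s` in `F`:
    (k : ℕ) (b : Fin k → Cp) (hbK : ∀ i, b i ∈ K) (hbs : ∀ i, ‖b i‖ ≤ s)
    -- i.e. `f(z) = (z - b 1)⋯(z - b k) * g(z)` on the closed ball of radius `r` in `F`:
    (hfactor : ∀ z ∈ K, ‖z‖ ≤ r →
      ∑' n, a n * z ^ n = (∏ i, (z - b i)) * ∑' n, c n * z ^ n) :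
    -- conclusion: `|f|_s ≤ (s/t)^k * |f|_t`
    gaussNorm a s ≤ (s / t) ^ k * gaussNorm a t := by
  have ht0 : 0 < t := lt_of_lt_of_le hs hst
  obtain ⟨d, hd, hdeval, hds, hdt⟩ := product_coeffs hr hs hst htr hc k b hbs
  -- `a` and `d` agree, by uniqueness of coefficients
  have hdiff : Tendsto (fun n => ‖a n - d n‖ * r ^ n) atTop (nhds 0) := by
    refine squeeze_zero (fun n => by positivity) (fun n => ?_) (by simpa using ha.add hd)
    calc ‖a n - d n‖ * r ^ n ≤ (‖a n‖ + ‖d n‖) * r ^ n :=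
          mul_le_mul_of_nonneg_right (norm_sub_le _ _) (by positivity)
      _ = ‖a n‖ * r ^ n + ‖d n‖ * r ^ n := by ring
  have hvan : ∀ z ∈ K, ‖z‖ ≤ r → ∑' n, (a n - d n) * z ^ n = 0 := by
    intro z hzK hzr
    have h1 : ∑' n, (a n - d n) * z ^ n = (∑' n, a n * z ^ n) - ∑' n, d n * z ^ n := by
      exact (tsum_congr fun n => by ring).trans
        (Summable.tsum_sub (summable_of_decay ha hzr) (summable_of_decay hd hzr))
    rw [h1, hfactor z hzK hzr, hdeval z hzr, sub_self]
  have haeq : a = d := funext fun n => sub_eq_zero.mp (uniq p hpCp K hr hdiff hvan n)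
  rw [haeq]
  have hct := decay_mono ht0.le htr hc
  have hcs_le : gaussNorm c s ≤ gaussNorm c t := gauss_mono hs.le hst hct
  have h2 : gaussNorm c t ≤ gaussNorm d t / t ^ k := by
    rw [le_div_iff₀ (by positivity)]
    calc gaussNorm c t * t ^ k = t ^ k * gaussNorm c t := by ring
      _ ≤ gaussNorm d t := hdt
  calc gaussNorm d s ≤ s ^ k * gaussNorm c s := hds
    _ ≤ s ^ k * gaussNorm c t := mul_le_mul_of_nonneg_left hcs_le (by positivity)
    _ ≤ s ^ k * (gaussNorm d t / t ^ k) := mul_le_mul_of_nonneg_left h2 (by positivity)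
    _ = (s / t) ^ k * gaussNorm d t := by rw [div_pow]; ring
end

section
/- Let p be a prime, δ > 0, and let f(z) = ∑_{n≥0} a_n zⁿ be a nonzero function analytic on the closed ball {x ∈ ℂ_p : |x|_p ≤ δ}. Let k be a positive integer and suppose that f has at most k − 1 zeros (counted with multiplicity) in the open ball B(δ) = {x ∈ ℂ_p : |x|_p < δ}, in the sense that f(z) = α·(z − b₁)⋯(z − b_m)·g(z) with m ≤ k − 1, α ∈ ℂ_p, b₁, …, b_m ∈ B(δ), and g analytic on the closed ball {x : |x|_p ≤ δ} with no zero in B(δ). Then the Gauss norm of f at δ is attained among the first k coefficients: |f|_δ = max_{0 ≤ n ≤ k−1} |a_n|_p · δⁿ, equivalently |f|_δ = max_{0 ≤ n ≤ k−1} |f^{(n)}(0)/n!|_p · δⁿ. -/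
/-!
STATEMENT 3.

We model `ℂ_p` by an arbitrary algebraically closed, complete, nonarchimedean
normed field `Cp` whose norm satisfies `‖p‖ = p⁻¹` (of which `ℂ_p` is an
instance).

A function analytic on the closed ball of radius `δ` is given by its
coefficient sequence `a : ℕ → Cp` satisfying `‖a n‖ * δ ^ n → 0`; its value at
`z` is `∑' n, a n * z ^ n`, its Gauss norm at radius `δ` is
`⨆ n, ‖a n‖ * δ ^ n`, and `f⁽ⁿ⁾(0)/n! = a n`.
-/

open Filter

section St3Aux
open IsUltrametricDist Polynomial
set_option linter.unusedSectionVars false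
set_option linter.unusedVariables false
set_option maxHeartbeats 1000000
variable {K : Type*} [NontriviallyNormedField K] [IsUltrametricDist K]



lemma st3_summable [CompleteSpace K] {f : ℕ → K}
    (hf : Tendsto (fun n => ‖f n‖) atTop (nhds 0)) : Summable f := by
  rw [summable_iff_vanishing_norm]
  intro ε hε
  obtain ⟨N, hN⟩ := (hf.eventually (gt_mem_nhds hε)).exists_forall_of_atTop
  refine ⟨Finset.range N, fun t ht => ?_⟩
  obtain ⟨i, hi, hle⟩ := exists_norm_finset_sum_le t f
  rcases t.eq_empty_or_nonempty with rfl | hne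
  · simpa using hε
  · refine lt_of_le_of_lt hle (hN i ?_)
    have := hi hne
    have : i ∉ Finset.range N := fun hmem => (Finset.disjoint_left.mp ht (hi hne)) hmem
    simpa using Nat.le_of_not_lt (by simpa using this)

lemma st3_term_le {c : ℕ → K} {δ : ℝ} (hδ : 0 < δ) {z : K} (hz : ‖z‖ ≤ δ) (n : ℕ) :
    ‖c n * z ^ n‖ ≤ ‖c n‖ * δ ^ n := by
  rw [norm_mul, norm_pow]
  exact mul_le_mul_of_nonneg_left (pow_le_pow_left₀ (norm_nonneg z) hz n) (norm_nonneg _)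

lemma st3_summable_pow [CompleteSpace K] {c : ℕ → K} {δ : ℝ} (hδ : 0 < δ)
    (hc : Tendsto (fun n => ‖c n‖ * δ ^ n) atTop (nhds 0)) {z : K} (hz : ‖z‖ ≤ δ) :
    Summable fun n => c n * z ^ n := by
  refine st3_summable (squeeze_zero (fun n => norm_nonneg _) (fun n => st3_term_le hδ hz n) hc)

lemma st3_bound {c : ℕ → K} {δ : ℝ} (hc : Tendsto (fun n => ‖c n‖ * δ ^ n) atTop (nhds 0)) :
    ∃ M : ℝ, 0 < M ∧ ∀ n, ‖c n‖ * δ ^ n ≤ M := by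
  obtain ⟨M, hM⟩ := hc.bddAbove_range
  exact ⟨max M 1, lt_of_lt_of_le one_pos (le_max_right _ _),
    fun n => le_trans (hM (Set.mem_range_self n)) (le_max_left _ _)⟩


-- minimal attaining index
lemma st3_argmax {c : ℕ → K} {r : ℝ} (hr : 0 < r)
    (hc : Tendsto (fun n => ‖c n‖ * r ^ n) atTop (nhds 0)) (h0 : ∃ n, c n ≠ 0) :
    ∃ i, c i ≠ 0 ∧ (∀ n, ‖c n‖ * r ^ n ≤ ‖c i‖ * r ^ i) ∧
      ∀ n < i, ‖c n‖ * r ^ n < ‖c i‖ * r ^ i := by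
  obtain ⟨n₀, hn₀⟩ := h0
  have ht : 0 < ‖c n₀‖ * r ^ n₀ := mul_pos (norm_pos_iff.mpr hn₀) (pow_pos hr n₀)
  obtain ⟨N, hN⟩ := (hc.eventually (gt_mem_nhds ht)).exists_forall_of_atTop
  have hn₀N : n₀ < N := by
    by_contra h
    exact absurd (hN n₀ (Nat.le_of_not_lt h)) (lt_irrefl _)
  have hP : ∃ i, ∀ n, ‖c n‖ * r ^ n ≤ ‖c i‖ * r ^ i := by
    obtain ⟨i, hiR, hmax⟩ := (Finset.range (N + 1)).exists_max_image
      (fun n => ‖c n‖ * r ^ n) ⟨n₀, Finset.mem_range.mpr (by omega)⟩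
    refine ⟨i, fun n => ?_⟩
    rcases lt_or_ge n (N + 1) with h | h
    · exact hmax n (Finset.mem_range.mpr h)
    · exact le_of_lt (lt_of_lt_of_le (hN n (by omega))
        (hmax n₀ (Finset.mem_range.mpr (by omega))))
  classical
  have hi : ∀ n, ‖c n‖ * r ^ n ≤ ‖c (Nat.find hP)‖ * r ^ (Nat.find hP) := Nat.find_spec hP
  refine ⟨Nat.find hP, ?_, hi, fun n hn => ?_⟩
  · intro h
    have h2 := hi n₀
    rw [h] at h2
    simp only [norm_zero, zero_mul] at h2
    exact absurd (lt_of_lt_of_le ht h2) (lt_irrefl _)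
  · have h3 := Nat.find_min hP hn
    push_neg at h3
    obtain ⟨k, hk⟩ := h3
    exact lt_of_lt_of_le hk (hi k)



lemma st3_norm_add_eq {x y : K} (h : ‖y‖ < ‖x‖) : ‖x + y‖ = ‖x‖ := by
  refine le_antisymm (le_trans (norm_add_le_max x y) (max_le le_rfl h.le)) ?_
  by_contra hcon
  push_neg at hcon
  have : ‖x‖ ≤ max ‖x + y‖ ‖y‖ := by
    simpa using norm_add_le_max (x + y) (-y)
  rcases max_cases ‖x + y‖ ‖y‖ with ⟨he, _⟩ | ⟨he, _⟩ <;> rw [he] at this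
  · exact absurd (lt_of_le_of_lt this hcon) (lt_irrefl _)
  · exact absurd (lt_of_le_of_lt this h) (lt_irrefl _)

noncomputable def st3conv (u v : ℕ → K) (n : ℕ) : K :=
  ∑ ij ∈ Finset.HasAntidiagonal.antidiagonal n, u ij.1 * v ij.2

lemma st3_conv_le {u v : ℕ → K} {r U V : ℝ} (hr : 0 < r)
    (hu : ∀ n, ‖u n‖ * r ^ n ≤ U) (hv : ∀ n, ‖v n‖ * r ^ n ≤ V) (n : ℕ) :
    ‖st3conv u v n‖ * r ^ n ≤ U * V := by
  have hU : 0 ≤ U := le_trans (by positivity) (hu 0)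
  have hV : 0 ≤ V := le_trans (by positivity) (hv 0)
  have hrn : (0:ℝ) < r ^ n := pow_pos hr n
  rw [← le_div_iff₀ hrn]
  refine norm_sum_le_of_forall_le_of_nonneg (by positivity) ?_
  intro ij hij
  have hsum : ij.1 + ij.2 = n := Finset.HasAntidiagonal.mem_antidiagonal.mp hij
  rw [norm_mul, le_div_iff₀ hrn, ← hsum, pow_add, ← mul_assoc]
  calc ‖u ij.1‖ * ‖v ij.2‖ * r ^ ij.1 * r ^ ij.2
      = (‖u ij.1‖ * r ^ ij.1) * (‖v ij.2‖ * r ^ ij.2) := by ring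
    _ ≤ U * V := mul_le_mul (hu _) (hv _) (by positivity) hU

lemma st3_pair_lt {u v : ℕ → K} {r : ℝ} (hr : 0 < r) {i j : ℕ}
    (hui : u i ≠ 0) (hvj : v j ≠ 0)
    (hu : ∀ n, ‖u n‖ * r ^ n ≤ ‖u i‖ * r ^ i) (hu' : ∀ n < i, ‖u n‖ * r ^ n < ‖u i‖ * r ^ i)
    (hv : ∀ n, ‖v n‖ * r ^ n ≤ ‖v j‖ * r ^ j) (hv' : ∀ n < j, ‖v n‖ * r ^ n < ‖v j‖ * r ^ j)
    {k l : ℕ} (h : k < i ∨ l < j) :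
    ‖u k * v l‖ * (r ^ k * r ^ l) < (‖u i‖ * r ^ i) * (‖v j‖ * r ^ j) := by
  have hX : 0 < ‖u i‖ * r ^ i := mul_pos (norm_pos_iff.mpr hui) (pow_pos hr i)
  have hY : 0 < ‖v j‖ * r ^ j := mul_pos (norm_pos_iff.mpr hvj) (pow_pos hr j)
  have hterm : ‖u k * v l‖ * (r ^ k * r ^ l) = (‖u k‖ * r ^ k) * (‖v l‖ * r ^ l) := by
    rw [norm_mul]; ring
  rw [hterm]
  rcases h with h | h
  · calc (‖u k‖ * r ^ k) * (‖v l‖ * r ^ l)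
        ≤ (‖u k‖ * r ^ k) * (‖v j‖ * r ^ j) :=
          mul_le_mul_of_nonneg_left (hv l) (by positivity)
      _ < (‖u i‖ * r ^ i) * (‖v j‖ * r ^ j) := mul_lt_mul_of_pos_right (hu' k h) hY
  · calc (‖u k‖ * r ^ k) * (‖v l‖ * r ^ l)
        ≤ (‖u i‖ * r ^ i) * (‖v l‖ * r ^ l) :=
          mul_le_mul_of_nonneg_right (hu k) (by positivity)
      _ < (‖u i‖ * r ^ i) * (‖v j‖ * r ^ j) := mul_lt_mul_of_pos_left (hv' l h) hX

lemma st3_conv_eq {u v : ℕ → K} {r : ℝ} (hr : 0 < r) {i j : ℕ}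
    (hui : u i ≠ 0) (hvj : v j ≠ 0)
    (hu : ∀ n, ‖u n‖ * r ^ n ≤ ‖u i‖ * r ^ i) (hu' : ∀ n < i, ‖u n‖ * r ^ n < ‖u i‖ * r ^ i)
    (hv : ∀ n, ‖v n‖ * r ^ n ≤ ‖v j‖ * r ^ j) (hv' : ∀ n < j, ‖v n‖ * r ^ n < ‖v j‖ * r ^ j) :
    ‖st3conv u v (i + j)‖ * r ^ (i + j) = (‖u i‖ * r ^ i) * (‖v j‖ * r ^ j) := by
  classical
  have hmem : ((i, j) : ℕ × ℕ) ∈ Finset.HasAntidiagonal.antidiagonal (i + j) := by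
    simp [Finset.HasAntidiagonal.mem_antidiagonal]
  have hXY : 0 < (‖u i‖ * r ^ i) * (‖v j‖ * r ^ j) := by
    have hX : 0 < ‖u i‖ * r ^ i := mul_pos (norm_pos_iff.mpr hui) (pow_pos hr i)
    have hY : 0 < ‖v j‖ * r ^ j := mul_pos (norm_pos_iff.mpr hvj) (pow_pos hr j)
    exact mul_pos hX hY
  have hmain : ‖u i * v j‖ * r ^ (i + j) = (‖u i‖ * r ^ i) * (‖v j‖ * r ^ j) := by
    rw [norm_mul, pow_add]; ring
  have hsplit : st3conv u v (i + j)
      = u i * v j + ∑ ij ∈ (Finset.HasAntidiagonal.antidiagonal (i + j)).erase (i, j), u ij.1 * v ij.2 := by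
    rw [st3conv, ← Finset.add_sum_erase _ (fun ij : ℕ × ℕ => u ij.1 * v ij.2) hmem]
  have hrest : ‖∑ ij ∈ (Finset.HasAntidiagonal.antidiagonal (i + j)).erase (i, j), u ij.1 * v ij.2‖
      < ‖u i * v j‖ := by
    obtain ⟨kl, hklmem, hle⟩ :=
      exists_norm_finset_sum_le ((Finset.HasAntidiagonal.antidiagonal (i + j)).erase (i, j))
        (fun ij => u ij.1 * v ij.2)
    rcases ((Finset.HasAntidiagonal.antidiagonal (i + j)).erase (i, j)).eq_empty_or_nonempty with he | hne
    · rw [he]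
      simp only [Finset.sum_empty, norm_zero, norm_mul]
      exact mul_pos (norm_pos_iff.mpr hui) (norm_pos_iff.mpr hvj)
    · have hklm := hklmem hne
      have hne' : kl ≠ (i, j) := Finset.ne_of_mem_erase hklm
      have hklsum : kl.1 + kl.2 = i + j :=
        Finset.HasAntidiagonal.mem_antidiagonal.mp (Finset.mem_of_mem_erase hklm)
      have hcase : kl.1 < i ∨ kl.2 < j := by
        by_contra hcon
        push_neg at hcon
        have h1 : kl.1 = i := by omega
        have h2 : kl.2 = j := by omega
        exact hne' (Prod.ext h1 h2)
      have hlt := st3_pair_lt hr hui hvj hu hu' hv hv' hcase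
      have hpow : r ^ kl.1 * r ^ kl.2 = r ^ (i + j) := by rw [← pow_add, hklsum]
      have h2 : ‖u kl.1 * v kl.2‖ * r ^ (i + j) < ‖u i * v j‖ * r ^ (i + j) := by
        calc ‖u kl.1 * v kl.2‖ * r ^ (i + j)
            = ‖u kl.1 * v kl.2‖ * (r ^ kl.1 * r ^ kl.2) := by rw [hpow]
          _ < ‖u i‖ * r ^ i * (‖v j‖ * r ^ j) := hlt
          _ = ‖u i * v j‖ * r ^ (i + j) := hmain.symm
      exact lt_of_le_of_lt hle (lt_of_mul_lt_mul_right h2 (by positivity))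
  rw [hsplit, st3_norm_add_eq hrest, hmain]

lemma st3_conv_lt {u v : ℕ → K} {r : ℝ} (hr : 0 < r) {i j : ℕ}
    (hui : u i ≠ 0) (hvj : v j ≠ 0)
    (hu : ∀ n, ‖u n‖ * r ^ n ≤ ‖u i‖ * r ^ i) (hu' : ∀ n < i, ‖u n‖ * r ^ n < ‖u i‖ * r ^ i)
    (hv : ∀ n, ‖v n‖ * r ^ n ≤ ‖v j‖ * r ^ j) (hv' : ∀ n < j, ‖v n‖ * r ^ n < ‖v j‖ * r ^ j)
    {n : ℕ} (hn : n < i + j) :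
    ‖st3conv u v n‖ * r ^ n < (‖u i‖ * r ^ i) * (‖v j‖ * r ^ j) := by
  obtain ⟨kl, hklmem, hle⟩ :=
    exists_norm_finset_sum_le (Finset.HasAntidiagonal.antidiagonal n) (fun ij => u ij.1 * v ij.2)
  have hne : (Finset.HasAntidiagonal.antidiagonal n).Nonempty := ⟨(0, n), by simp⟩
  have hklm := hklmem hne
  have hklsum : kl.1 + kl.2 = n := Finset.HasAntidiagonal.mem_antidiagonal.mp hklm
  have hcase : kl.1 < i ∨ kl.2 < j := by omega
  have hlt := st3_pair_lt hr hui hvj hu hu' hv hv' hcase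
  calc ‖st3conv u v n‖ * r ^ n ≤ ‖u kl.1 * v kl.2‖ * r ^ n :=
        mul_le_mul_of_nonneg_right hle (by positivity)
    _ = ‖u kl.1 * v kl.2‖ * (r ^ kl.1 * r ^ kl.2) := by rw [← pow_add, hklsum]
    _ < _ := hlt




lemma st3_poly {r : ℝ} (hr : 0 < r) (lc : K) (hlc : lc ≠ 0) (s : Multiset K) :
    (∀ n, ‖(C lc * (s.map fun ρ => X - C ρ).prod).coeff n‖ * r ^ n
        ≤ ‖lc‖ * (s.map fun ρ => max r ‖ρ‖).prod)
    ∧ ‖(C lc * (s.map fun ρ => X - C ρ).prod).coeff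
          ((s.filter fun ρ => ‖ρ‖ < r).card)‖ * r ^ ((s.filter fun ρ => ‖ρ‖ < r).card)
        = ‖lc‖ * (s.map fun ρ => max r ‖ρ‖).prod
    ∧ ∀ n < (s.filter fun ρ => ‖ρ‖ < r).card,
        ‖(C lc * (s.map fun ρ => X - C ρ).prod).coeff n‖ * r ^ n
          < ‖lc‖ * (s.map fun ρ => max r ‖ρ‖).prod := by
  classical
  induction s using Multiset.induction_on with
  | empty =>
    simp only [Multiset.map_zero, Multiset.prod_zero, mul_one, Multiset.filter_zero,
      Multiset.card_zero, pow_zero, coeff_C]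
    refine ⟨fun n => ?_, by simp, by omega⟩
    rcases n with _ | n
    · simp
    · rw [if_neg (Nat.succ_ne_zero n)]
      simp only [norm_zero, zero_mul]
      positivity
  | cons a t IH =>
    obtain ⟨IH1, IH2, IH3⟩ := IH
    set v : ℕ → K := fun n => (C lc * (t.map fun ρ => X - C ρ).prod).coeff n with hv_def
    set i' : ℕ := (t.filter fun ρ => ‖ρ‖ < r).card with hi'_def
    set B' : ℝ := ‖lc‖ * (t.map fun ρ => max r ‖ρ‖).prod with hB'_def
    have hB'pos : 0 < B' := by
      refine mul_pos (norm_pos_iff.mpr hlc) (Multiset.prod_pos ?_)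
      intro x hx
      obtain ⟨ρ, _, rfl⟩ := Multiset.mem_map.mp hx
      exact lt_of_lt_of_le hr (le_max_left _ _)
    have hvi' : v i' ≠ 0 := by
      intro h
      rw [show v i' = (C lc * (Multiset.map (fun ρ => X - C ρ) t).prod).coeff i' from rfl] at h
      rw [h] at IH2
      simp only [norm_zero, zero_mul] at IH2
      rw [← IH2] at hB'pos
      exact lt_irrefl _ hB'pos
    have hv1 : ∀ n, ‖v n‖ * r ^ n ≤ ‖v i'‖ * r ^ i' := fun n => IH2 ▸ IH1 n
    have hv2 : ∀ n < i', ‖v n‖ * r ^ n < ‖v i'‖ * r ^ i' := fun n hn => IH2 ▸ IH3 n hn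
    set u : ℕ → K := fun n => ((X : K[X]) - C a).coeff n with hu_def
    have hu0 : u 0 = -a := by simp [hu_def]
    have hu1 : u 1 = 1 := by simp [hu_def]
    have hu2 : ∀ n, 2 ≤ n → u n = 0 := by
      intro n hn
      have h1 : ¬(n = 1) := by omega
      have h0 : ¬(n = 0) := by omega
      simp [hu_def, Polynomial.coeff_X, Polynomial.coeff_C, h0, h1, Ne.symm h1]
    obtain ⟨iu, hiu_if, hui_ne, huval, hu1', hu2'⟩ :
        ∃ iu, iu = (if ‖a‖ < r then 1 else 0) ∧ u iu ≠ 0 ∧ ‖u iu‖ * r ^ iu = max r ‖a‖ ∧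
          (∀ n, ‖u n‖ * r ^ n ≤ ‖u iu‖ * r ^ iu) ∧ (∀ n < iu, ‖u n‖ * r ^ n < ‖u iu‖ * r ^ iu) := by
      rcases lt_or_ge ‖a‖ r with hlt | hge
      · refine ⟨1, by simp [hlt], by simp [hu1], ?_, ?_, ?_⟩
        · rw [hu1]; simp [max_eq_left hlt.le]
        · intro n
          match n with
          | 0 =>
            rw [hu0, hu1]
            simpa using hlt.le
          | 1 => exact le_rfl
          | (n+2) =>
            rw [hu2 (n+2) (by omega), hu1]
            simp only [norm_zero, zero_mul, norm_one, one_mul]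
            positivity
        · intro n hn
          interval_cases n
          rw [hu0, hu1]
          simpa using hlt
      · refine ⟨0, by simp [not_lt.mpr hge], ?_, ?_, ?_, by omega⟩
        · rw [hu0]
          simp only [ne_eq, neg_eq_zero]
          intro h
          rw [h] at hge
          simp only [norm_zero] at hge
          exact absurd (lt_of_le_of_lt hge hr) (lt_irrefl _)
        · rw [hu0]; simp [max_eq_right hge]
        · intro n
          match n with
          | 0 => exact le_rfl
          | 1 =>
            rw [hu0, hu1]
            simpa using hge
          | (n+2) =>
            rw [hu2 (n+2) (by omega), hu0]
            simp only [norm_zero, zero_mul, norm_neg, pow_zero, mul_one]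
            positivity
    have hcoeff : ∀ n, (C lc * ((a ::ₘ t).map fun ρ => X - C ρ).prod).coeff n
        = st3conv u v n := by
      intro n
      rw [Multiset.map_cons, Multiset.prod_cons, mul_left_comm, Polynomial.coeff_mul]
      rfl
    have hcard : ((a ::ₘ t).filter fun ρ => ‖ρ‖ < r).card = iu + i' := by
      rcases lt_or_ge ‖a‖ r with hlt | hge
      · rw [Multiset.filter_cons_of_pos (p := fun ρ => ‖ρ‖ < r) _ hlt, Multiset.card_cons,
          hiu_if, if_pos hlt]
        omega
      · rw [Multiset.filter_cons_of_neg (p := fun ρ => ‖ρ‖ < r) _ (not_lt.mpr hge),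
          hiu_if, if_neg (not_lt.mpr hge)]
        omega
    have hBval : ‖lc‖ * ((a ::ₘ t).map fun ρ => max r ‖ρ‖).prod
        = (‖u iu‖ * r ^ iu) * (‖v i'‖ * r ^ i') := by
      rw [Multiset.map_cons, Multiset.prod_cons, huval, IH2]
      ring
    refine ⟨fun n => ?_, ?_, fun n hn => ?_⟩
    · rw [hcoeff, hBval]
      exact st3_conv_le hr hu1' hv1 n
    · rw [hcoeff, hBval, hcard]
      exact st3_conv_eq hr hui_ne hvi' hu1' hu2' hv1 hv2
    · rw [hcoeff, hBval]
      rw [hcard] at hn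
      exact st3_conv_lt hr hui_ne hvi' hu1' hu2' hv1 hv2 hn





lemma st3_geom_bound {δ : ℝ} (hδ : 0 < δ) {M : ℝ} {e : ℕ → K}
    (hM : ∀ n, ‖e n‖ * δ ^ n ≤ M) {z : K} (hz : ‖z‖ < δ) (n : ℕ) :
    ‖e n * z ^ n‖ ≤ M * (‖z‖ / δ) ^ n := by
  rw [norm_mul, norm_pow, div_pow, ← mul_div_assoc, le_div_iff₀ (pow_pos hδ n)]
  calc ‖e n‖ * ‖z‖ ^ n * δ ^ n = (‖e n‖ * δ ^ n) * ‖z‖ ^ n := by ring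
    _ ≤ M * ‖z‖ ^ n := mul_le_mul_of_nonneg_right (hM n) (by positivity)

lemma st3_summable_of_bound [CompleteSpace K] {δ : ℝ} (hδ : 0 < δ) {M : ℝ} {e : ℕ → K}
    (hM : ∀ n, ‖e n‖ * δ ^ n ≤ M) {z : K} (hz : ‖z‖ < δ) :
    Summable fun n => e n * z ^ n := by
  refine st3_summable (squeeze_zero (fun n => norm_nonneg _) (st3_geom_bound hδ hM hz) ?_)
  have ht : |‖z‖ / δ| < 1 := by
    rw [abs_of_nonneg (by positivity)]
    rw [div_lt_one hδ]
    exact hz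
  simpa using (tendsto_pow_atTop_nhds_zero_of_abs_lt_one ht).const_mul M

lemma st3_summable_norm_of_bound {δ : ℝ} (hδ : 0 < δ) {M : ℝ} {e : ℕ → K}
    (hM : ∀ n, ‖e n‖ * δ ^ n ≤ M) {z : K} (hz : ‖z‖ < δ) :
    Summable fun n => ‖e n * z ^ n‖ := by
  have ht : ‖z‖ / δ < 1 := by rw [div_lt_one hδ]; exact hz
  exact Summable.of_nonneg_of_le (fun n => norm_nonneg _) (st3_geom_bound hδ hM hz)
    ((summable_geometric_of_lt_one (by positivity) ht).mul_left M)

/-- Identity theorem: if the series vanishes on the open ball, all coefficients vanish. -/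
lemma st3_identity [CompleteSpace K] {δ : ℝ} (hδ : 0 < δ) {e : ℕ → K} {M : ℝ} (hMpos : 0 < M)
    (hM : ∀ n, ‖e n‖ * δ ^ n ≤ M)
    (hz : ∀ z : K, ‖z‖ < δ → ∑' n, e n * z ^ n = 0) (n : ℕ) : e n = 0 := by
  classical
  by_contra hcon
  have hex : ∃ n, e n ≠ 0 := ⟨n, hcon⟩
  set N := Nat.find hex with hN_def
  have heN : e N ≠ 0 := Nat.find_spec hex
  have hlow : ∀ i < N, e i = 0 := fun i hi => by
    by_contra h
    exact absurd (Nat.find_le h : N ≤ i) (by omega)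
  have hrpos : 0 < min δ (‖e N‖ * δ ^ (N + 1) / M) := by
    refine lt_min hδ ?_
    have : 0 < ‖e N‖ := norm_pos_iff.mpr heN
    positivity
  obtain ⟨z, hz0, hzlt⟩ := NormedField.exists_norm_lt K hrpos
  have hzδ : ‖z‖ < δ := lt_of_lt_of_le hzlt (min_le_left _ _)
  have hsum := st3_summable_of_bound hδ hM hzδ (z := z)
  have h0 := hz z hzδ
  have hsplit := Summable.sum_add_tsum_nat_add (f := fun n => e n * z ^ n) (N + 1) hsum
  rw [h0] at hsplit
  have hhead : ∑ i ∈ Finset.range (N + 1), e i * z ^ i = e N * z ^ N := by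
    rw [Finset.sum_range_succ]
    rw [Finset.sum_eq_zero fun i hi => by
      rw [hlow i (Finset.mem_range.mp hi), zero_mul]]
    rw [zero_add]
  rw [hhead] at hsplit
  -- hsplit : e N * z ^ N + ∑' i, e (i + (N+1)) * z ^ (i + (N+1)) = 0
  have htail : ‖∑' i, e (i + (N + 1)) * z ^ (i + (N + 1))‖ ≤ M * (‖z‖ / δ) ^ (N + 1) := by
    refine norm_tsum_le_of_forall_le_of_nonneg (by positivity) fun i => ?_
    refine le_trans (st3_geom_bound hδ hM hzδ (i + (N + 1))) ?_
    have ht1 : ‖z‖ / δ < 1 := by rw [div_lt_one hδ]; exact hzδ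
    refine mul_le_mul_of_nonneg_left ?_ (le_of_lt hMpos)
    exact pow_le_pow_of_le_one (by positivity) ht1.le (by omega)
  have heq : ‖e N * z ^ N‖ = ‖∑' i, e (i + (N + 1)) * z ^ (i + (N + 1))‖ := by
    have : e N * z ^ N = -∑' i, e (i + (N + 1)) * z ^ (i + (N + 1)) :=
      eq_neg_of_add_eq_zero_left hsplit
    rw [this, norm_neg]
  have hnorm : ‖e N‖ * ‖z‖ ^ N ≤ M * (‖z‖ / δ) ^ (N + 1) := by
    rw [← norm_pow, ← norm_mul, heq]
    exact htail
  have hzM : ‖z‖ < ‖e N‖ * δ ^ (N + 1) / M :=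
    lt_of_lt_of_le hzlt (min_le_right _ _)
  have hcontra : M * (‖z‖ / δ) ^ (N + 1) < ‖e N‖ * ‖z‖ ^ N := by
    have hδp : (0:ℝ) < δ ^ (N + 1) := pow_pos hδ _
    have hzNp : (0:ℝ) < ‖z‖ ^ N := pow_pos hz0 _
    have expand : M * (‖z‖ / δ) ^ (N + 1) = (M * ‖z‖ / δ ^ (N + 1)) * ‖z‖ ^ N := by
      rw [div_pow, pow_succ ‖z‖ N]
      field_simp
    rw [expand]
    refine mul_lt_mul_of_pos_right ?_ hzNp
    rw [div_lt_iff₀ hδp]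
    calc M * ‖z‖ < M * (‖e N‖ * δ ^ (N + 1) / M) :=
          mul_lt_mul_of_pos_left hzM hMpos
      _ = ‖e N‖ * δ ^ (N + 1) := by field_simp
  exact absurd (lt_of_le_of_lt hnorm hcontra) (lt_irrefl _)

/-- Evaluation of a polynomial as a tsum. -/
lemma st3_poly_eval_tsum (P : K[X]) (z : K) : P.eval z = ∑' n, P.coeff n * z ^ n := by
  rw [Polynomial.eval_eq_sum_range]
  rw [tsum_eq_sum (s := Finset.range (P.natDegree + 1))]
  intro i hi
  rw [Polynomial.coeff_eq_zero_of_natDegree_lt, zero_mul]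
  simpa using Nat.lt_of_succ_le (Nat.succ_le_of_lt (by
    simpa using Nat.lt_of_not_le fun h => hi (Finset.mem_range.mpr (by omega))))

/-- Cauchy product with a polynomial coefficient sequence, inside the open ball. -/
lemma st3_cauchy [CompleteSpace K] {δ : ℝ} (hδ : 0 < δ) {q c : ℕ → K} {Mq Mc : ℝ}
    (hq : ∀ n, ‖q n‖ * δ ^ n ≤ Mq) (hc : ∀ n, ‖c n‖ * δ ^ n ≤ Mc)
    {z : K} (hz : ‖z‖ < δ) :
    (∑' n, q n * z ^ n) * (∑' n, c n * z ^ n) = ∑' n, st3conv q c n * z ^ n := by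
  rw [tsum_mul_tsum_eq_tsum_sum_antidiagonal_of_summable_norm
    (st3_summable_norm_of_bound hδ hq hz) (st3_summable_norm_of_bound hδ hc hz)]
  refine tsum_congr fun n => ?_
  rw [st3conv, Finset.sum_mul]
  refine Finset.sum_congr rfl fun kl hkl => ?_
  have hsum : kl.1 + kl.2 = n := Finset.HasAntidiagonal.mem_antidiagonal.mp hkl
  rw [← hsum, pow_add]
  ring




lemma st3_norm_sub_of_lt {x y : K} (h : ‖x‖ < ‖y‖) : ‖x - y‖ = ‖y‖ := by
  rw [sub_eq_add_neg, add_comm]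
  rw [show ‖y‖ = ‖-y‖ from (norm_neg y).symm] at h ⊢
  exact st3_norm_add_eq h

lemma st3_multiset_min {α : Type*} (f : α → ℝ) (s : Multiset α) (h : s ≠ 0) :
    ∃ a ∈ s, ∀ b ∈ s, f a ≤ f b := by
  induction s using Multiset.induction_on with
  | empty => exact absurd rfl h
  | cons a t IH =>
    rcases eq_or_ne t 0 with rfl | ht
    · exact ⟨a, Multiset.mem_cons_self a 0, fun b hb => by
        rw [Multiset.mem_cons] at hb
        rcases hb with rfl | hb
        · exact le_rfl
        · exact absurd hb (by simp)⟩
    · obtain ⟨a', ha'mem, ha'min⟩ := IH ht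
      rcases le_total (f a) (f a') with hle | hle
      · refine ⟨a, Multiset.mem_cons_self a t, fun b hb => ?_⟩
        rw [Multiset.mem_cons] at hb
        rcases hb with rfl | hb
        · exact le_rfl
        · exact le_trans hle (ha'min b hb)
      · refine ⟨a', Multiset.mem_cons_of_mem ha'mem, fun b hb => ?_⟩
        rw [Multiset.mem_cons] at hb
        rcases hb with rfl | hb
        · exact hle
        · exact ha'min b hb

lemma st3_pow_card_le_prod (s : Multiset ℝ) (d : ℝ) (hd : 0 ≤ d) (h : ∀ x ∈ s, d ≤ x) :
    d ^ s.card ≤ s.prod := by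
  induction s using Multiset.induction_on with
  | empty => simp
  | cons a t IH =>
    rw [Multiset.card_cons, Multiset.prod_cons, pow_succ, mul_comm (d ^ Multiset.card t) d]
    have ha := h a (Multiset.mem_cons_self a t)
    refine mul_le_mul ha (IH fun x hx => h x (Multiset.mem_cons_of_mem hx)) (by positivity) ?_
    exact le_trans hd ha

lemma st3_norm_multiset_prod (s : Multiset K) : ‖s.prod‖ = (s.map fun x : K => ‖x‖).prod := by
  induction s using Multiset.induction_on with
  | empty => simp
  | cons a t IH => simp [norm_mul, IH]

lemma st3_pow_diff {r : ℝ} {x y : K} (hx : ‖x‖ ≤ r) (hy : ‖y‖ ≤ r) (d : ℕ) :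
    ‖x ^ (d + 1) - y ^ (d + 1)‖ ≤ r ^ d * ‖x - y‖ := by
  have hr0 : 0 ≤ r := le_trans (norm_nonneg x) hx
  rw [← geom_sum₂_mul, norm_mul]
  refine mul_le_mul_of_nonneg_right ?_ (norm_nonneg _)
  refine norm_sum_le_of_forall_le_of_nonneg (by positivity) fun i hi => ?_
  have hid : i ≤ d := by
    have := Finset.mem_range.mp hi
    omega
  rw [norm_mul, norm_pow, norm_pow]
  calc ‖x‖ ^ i * ‖y‖ ^ (d + 1 - 1 - i)
      ≤ r ^ i * r ^ (d + 1 - 1 - i) := by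
        refine mul_le_mul (pow_le_pow_left₀ (norm_nonneg x) hx i)
          (pow_le_pow_left₀ (norm_nonneg y) hy _) (by positivity) (by positivity)
    _ = r ^ d := by rw [← pow_add]; congr 1; omega



lemma st3_strassmann [CompleteSpace K] [IsAlgClosed K] {δ : ℝ} (hδ : 0 < δ) {c : ℕ → K}
    (hc : Tendsto (fun n => ‖c n‖ * δ ^ n) atTop (nhds 0))
    (hg : ∀ z : K, ‖z‖ < δ → (∑' n, c n * z ^ n) ≠ 0) (n₁ : ℕ) :
    ‖c n₁‖ * δ ^ n₁ ≤ ‖c 0‖ := by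
  classical
  by_contra hcon
  push_neg at hcon
  have hcν : c n₁ ≠ 0 := by
    intro h
    rw [h] at hcon
    simp only [norm_zero, zero_mul] at hcon
    exact absurd hcon (not_lt.mpr (norm_nonneg _))
  obtain ⟨μ, hcμ, hmax, hstrict⟩ := st3_argmax hδ hc ⟨n₁, hcν⟩
  have hμpos : 0 < μ := by
    rcases Nat.eq_zero_or_pos μ with h | h
    · subst h
      have h2 := hmax n₁
      rw [pow_zero, mul_one] at h2
      exact absurd (lt_of_lt_of_le hcon h2) (lt_irrefl _)
    · exact h
  set M := ‖c μ‖ * δ ^ μ with hM_def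
  have hMpos : 0 < M := mul_pos (norm_pos_iff.mpr hcμ) (pow_pos hδ μ)
  have hrange : (Finset.range μ).Nonempty := ⟨0, Finset.mem_range.mpr hμpos⟩
  set S := (Finset.range μ).sup' hrange (fun n => ‖c n‖ * δ ^ n) with hS_def
  have hSbound : ∀ n < μ, ‖c n‖ * δ ^ n ≤ S := by
    intro n hn
    rw [hS_def]
    exact Finset.le_sup' (fun n => ‖c n‖ * δ ^ n) (Finset.mem_range.mpr hn)
  have hSlt : S < M := by
    rw [hS_def, Finset.sup'_lt_iff]
    exact fun n hn => hstrict n (Finset.mem_range.mp hn)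
  have hS0 : 0 ≤ S := le_trans (by positivity) (hSbound 0 hμpos)
  set ρ := S / M with hρ_def
  have hρ1 : ρ < 1 := (div_lt_one hMpos).mpr hSlt
  have hρ0 : 0 ≤ ρ := div_nonneg hS0 hMpos.le
  obtain ⟨θ, hθ0, hθ1, hθρ⟩ : ∃ θ : ℝ, 0 < θ ∧ θ < 1 ∧ ρ < θ ^ μ := by
    have hcont : Tendsto (fun t : ℝ => t ^ μ) (nhds 1) (nhds 1) := by
      simpa using (continuous_pow μ).tendsto (1:ℝ)
    have hev : ∀ᶠ t : ℝ in nhds 1, ρ < t ^ μ := hcont.eventually (eventually_gt_nhds hρ1)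
    rw [Metric.eventually_nhds_iff] at hev
    obtain ⟨ε, hε, hball⟩ := hev
    refine ⟨max (1/2) (1 - ε/2), lt_of_lt_of_le (by norm_num) (le_max_left _ _),
      max_lt (by norm_num) (by linarith), ?_⟩
    refine hball ?_
    rw [Real.dist_eq, abs_sub_lt_iff]
    constructor
    · have : max (1/2) (1 - ε/2) < 1 := max_lt (by norm_num) (by linarith)
      linarith
    · have : 1 - ε/2 ≤ max (1/2) (1 - ε/2) := le_max_right _ _
      linarith
  set r := θ * δ with hr_def
  have hr0 : 0 < r := mul_pos hθ0 hδ
  have hrδ : r < δ := by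
    rw [hr_def]
    exact mul_lt_of_lt_one_left hδ hθ1
  set Mr := ‖c μ‖ * r ^ μ with hMr_def
  have hMrpos : 0 < Mr := mul_pos (norm_pos_iff.mpr hcμ) (pow_pos hr0 μ)
  have hMrM : Mr = M * θ ^ μ := by
    rw [hMr_def, hM_def, hr_def, mul_pow]
    ring
  have lemA : ∀ n < μ, ‖c n‖ * r ^ n < Mr := by
    intro n hn
    have h1 : ‖c n‖ * r ^ n ≤ S * θ ^ n :=
      calc ‖c n‖ * r ^ n = (‖c n‖ * δ ^ n) * θ ^ n := by rw [hr_def, mul_pow]; ring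
        _ ≤ S * θ ^ n := mul_le_mul_of_nonneg_right (hSbound n hn) (by positivity)
    have h2 : S * θ ^ n ≤ S := mul_le_of_le_one_right hS0 (pow_le_one₀ hθ0.le hθ1.le)
    have h3 : S = ρ * M := by rw [hρ_def]; field_simp
    have h4 : ρ * M < θ ^ μ * M := mul_lt_mul_of_pos_right hθρ hMpos
    calc ‖c n‖ * r ^ n ≤ S := le_trans h1 h2
      _ = ρ * M := h3
      _ < θ ^ μ * M := h4
      _ = Mr := by rw [hMrM]; ring
  have lemB : ∀ d, ‖c (μ + d)‖ * r ^ (μ + d) ≤ Mr * θ ^ d := by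
    intro d
    calc ‖c (μ + d)‖ * r ^ (μ + d)
        = (‖c (μ + d)‖ * δ ^ (μ + d)) * θ ^ (μ + d) := by rw [hr_def, mul_pow]; ring
      _ ≤ M * θ ^ (μ + d) := mul_le_mul_of_nonneg_right (hmax (μ + d)) (by positivity)
      _ = Mr * θ ^ d := by rw [hMrM, pow_add]; ring
  have lemC : ∀ n, ‖c n‖ * r ^ n ≤ Mr := by
    intro n
    rcases lt_or_ge n μ with h | h
    · exact (lemA n h).le
    · obtain ⟨d, rfl⟩ : ∃ d, n = μ + d := ⟨n - μ, by omega⟩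
      exact le_trans (lemB d)
        (mul_le_of_le_one_right hMrpos.le (pow_le_one₀ hθ0.le hθ1.le))
  -- truncated polynomials
  set T : ℕ → K[X] := fun N => ∑ n ∈ Finset.range (N + 1), Polynomial.monomial n (c n)
    with hT_def
  have hTcoeff : ∀ N k, (T N).coeff k = if k ≤ N then c k else 0 := by
    intro N k
    simp only [hT_def]
    rw [Polynomial.finset_sum_coeff]
    simp only [Polynomial.coeff_monomial]
    rw [Finset.sum_ite_eq' (Finset.range (N + 1)) k (fun n => c n)]
    congr 1
    simp [Nat.lt_succ_iff]
  have hTeval : ∀ N (z : K), (T N).eval z = ∑ n ∈ Finset.range (N + 1), c n * z ^ n := by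
    intro N z
    simp only [hT_def]
    rw [Polynomial.eval_finset_sum]
    simp [Polynomial.eval_monomial]
  have hTμ : ∀ N, μ ≤ N → (T N).coeff μ = c μ := by
    intro N hN
    rw [hTcoeff, if_pos hN]
  have hTne : ∀ N, μ ≤ N → T N ≠ 0 := by
    intro N hN h
    exact hcμ (by rw [← hTμ N hN, h, Polynomial.coeff_zero])
  have hTmax : ∀ N k, ‖(T N).coeff k‖ * r ^ k ≤ Mr := by
    intro N k
    rw [hTcoeff]
    split
    · exact lemC k
    · simp only [norm_zero, zero_mul]
      exact hMrpos.le
  have hTstrict : ∀ N k, k ≠ μ → ‖(T N).coeff k‖ * r ^ k < Mr := by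
    intro N k hk
    rw [hTcoeff]
    split
    · rcases lt_or_ge k μ with h | h
      · exact lemA k h
      · obtain ⟨d, rfl⟩ : ∃ d, k = μ + d := ⟨k - μ, by omega⟩
        have hd : 0 < d := by omega
        refine lt_of_le_of_lt (lemB d) ?_
        calc Mr * θ ^ d < Mr * 1 :=
              mul_lt_mul_of_pos_left (pow_lt_one₀ hθ0.le hθ1 (by omega)) hMrpos
          _ = Mr := mul_one _
    · simp only [norm_zero, zero_mul]
      exact hMrpos
  -- the key root-approximation step
  have hkey : ∀ N, μ ≤ N → ∀ w : K, ‖w‖ < r →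
      ∃ w', (‖w'‖ < r ∧ (T N).eval w' = 0) ∧
        ‖w - w'‖ ^ μ * Mr ≤ ‖(T N).eval w‖ * r ^ μ := by
    intro N hN w hw
    have hPne : T N ≠ 0 := hTne N hN
    set lc := (T N).leadingCoeff with hlc_def
    have hlc : lc ≠ 0 := Polynomial.leadingCoeff_ne_zero.mpr hPne
    set s := (T N).roots with hs_def
    have hfact : T N = C lc * (s.map fun a => X - C a).prod :=
      (IsAlgClosed.splits (T N)).eq_prod_roots
    obtain ⟨P1, P2, P3⟩ := st3_poly hr0 lc hlc s
    rw [← hfact] at P1 P2 P3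
    set i := (s.filter fun ρ' => ‖ρ'‖ < r).card with hi_def
    set B := ‖lc‖ * (s.map fun ρ' => max r ‖ρ'‖).prod with hB_def
    have hBMr : B = Mr := by
      refine le_antisymm ?_ ?_
      · rw [← P2]
        exact hTmax N i
      · calc Mr = ‖(T N).coeff μ‖ * r ^ μ := by rw [hTμ N hN]
          _ ≤ B := P1 μ
    have hiμ : i = μ := by
      by_contra hne
      have h2 := hTstrict N i hne
      rw [P2, hBMr] at h2
      exact lt_irrefl _ h2
    have hevalw : ∀ v : K, (T N).eval v = lc * ((s.map fun a => v - a).prod) := by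
      intro v
      conv_lhs => rw [hfact]
      rw [Polynomial.eval_mul, Polynomial.eval_C, Polynomial.eval_multiset_prod,
        Multiset.map_map]
      congr 1
      exact congr_arg Multiset.prod
        (Multiset.map_congr rfl fun a ha => by simp [Function.comp])
    set sin := s.filter (fun ρ' => ‖ρ'‖ < r) with hsin_def
    set sout := s.filter (fun ρ' => ¬ ‖ρ'‖ < r) with hsout_def
    have hsplit : sin + sout = s := Multiset.filter_add_not _ s
    have hcard_in : Multiset.card sin = μ := hiμ
    have hsin_ne : sin ≠ 0 := by
      intro h
      rw [h] at hcard_in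
      simp at hcard_in
      omega
    obtain ⟨ρ₀, hρ₀mem, hρ₀min⟩ := st3_multiset_min (fun a => ‖w - a‖) sin hsin_ne
    have hρ₀r : ‖ρ₀‖ < r := (Multiset.mem_filter.mp hρ₀mem).2
    have hρ₀root : (T N).eval ρ₀ = 0 :=
      Polynomial.isRoot_of_mem_roots (Multiset.mem_filter.mp hρ₀mem).1
    refine ⟨ρ₀, ⟨hρ₀r, hρ₀root⟩, ?_⟩
    have houtnn : (0:ℝ) ≤ (sout.map fun a => ‖w - a‖).prod :=
      Multiset.prod_nonneg (fun x hx => by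
        obtain ⟨a, _, rfl⟩ := Multiset.mem_map.mp hx
        exact norm_nonneg _)
    have hinnn : (0:ℝ) ≤ (sin.map fun a => ‖w - a‖).prod :=
      Multiset.prod_nonneg (fun x hx => by
        obtain ⟨a, _, rfl⟩ := Multiset.mem_map.mp hx
        exact norm_nonneg _)
    have hnorm_eval : ‖(T N).eval w‖
        = ‖lc‖ * ((sin.map fun a => ‖w - a‖).prod * (sout.map fun a => ‖w - a‖).prod) := by
      rw [hevalw w, norm_mul, st3_norm_multiset_prod, Multiset.map_map]
      congr 1
      conv_lhs => rw [← hsplit]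
      rw [Multiset.map_add, Multiset.prod_add]
      rfl
    have hout_val : ∀ a ∈ sout, ‖w - a‖ = max r ‖a‖ := by
      intro a ha
      have har : r ≤ ‖a‖ := not_lt.mp (Multiset.mem_filter.mp ha).2
      rw [st3_norm_sub_of_lt (lt_of_lt_of_le hw har), max_eq_right har]
    have hin_max : ∀ a ∈ sin, max r ‖a‖ = r := fun a ha =>
      max_eq_left (Multiset.mem_filter.mp ha).2.le
    have hMr_eq : Mr = ‖lc‖ * (r ^ μ * (sout.map fun a => ‖w - a‖).prod) := by
      rw [← hBMr, hB_def]
      conv_lhs => rw [← hsplit]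
      rw [Multiset.map_add, Multiset.prod_add]
      have h1 : (sin.map fun a => max r ‖a‖).prod = r ^ μ := by
        rw [Multiset.map_congr rfl hin_max, Multiset.map_const', Multiset.prod_replicate,
          hcard_in]
      have h2 : (sout.map fun a => max r ‖a‖).prod = (sout.map fun a => ‖w - a‖).prod := by
        congr 1
        exact Multiset.map_congr rfl fun a ha => (hout_val a ha).symm
      rw [h1, h2]
    have hprod_ge : ‖w - ρ₀‖ ^ μ ≤ (sin.map fun a => ‖w - a‖).prod := by
      have h1 := st3_pow_card_le_prod (sin.map fun a => ‖w - a‖) ‖w - ρ₀‖ (norm_nonneg _)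
        (fun x hx => by
          obtain ⟨a, ha, rfl⟩ := Multiset.mem_map.mp hx
          exact hρ₀min a ha)
      rw [Multiset.card_map, hcard_in] at h1
      exact h1
    rw [hnorm_eval, hMr_eq]
    calc ‖w - ρ₀‖ ^ μ * (‖lc‖ * (r ^ μ * (sout.map fun a => ‖w - a‖).prod))
        ≤ (sin.map fun a => ‖w - a‖).prod * (‖lc‖ * (r ^ μ * (sout.map fun a => ‖w - a‖).prod))
          := by
            refine mul_le_mul_of_nonneg_right hprod_ge ?_
            have : (0:ℝ) ≤ ‖lc‖ := norm_nonneg _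
            positivity
      _ = ‖lc‖ * ((sin.map fun a => ‖w - a‖).prod * (sout.map fun a => ‖w - a‖).prod) * r ^ μ
          := by ring
  -- the iteration
  set q := θ ^ ((1:ℝ) / μ) with hq_def
  have hμR : (0:ℝ) < (μ:ℝ) := by exact_mod_cast hμpos
  have hq0 : 0 < q := Real.rpow_pos_of_pos hθ0 _
  have hq1 : q < 1 := Real.rpow_lt_one hθ0.le hθ1 (by positivity)
  have hqμ : q ^ μ = θ := by
    rw [hq_def, ← Real.rpow_natCast (θ ^ ((1:ℝ) / μ)) μ, ← Real.rpow_mul hθ0.le]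
    rw [one_div, inv_mul_cancel₀ (ne_of_gt hμR), Real.rpow_one]
  have h0r : ‖(0:K)‖ < r := by simpa using hr0
  let Z : ∀ j : ℕ, {w : K // ‖w‖ < r ∧ (T (μ + j)).eval w = 0} := fun j => Nat.rec
    ⟨Classical.choose (hkey μ le_rfl 0 h0r),
      (Classical.choose_spec (hkey μ le_rfl 0 h0r)).1⟩
    (fun j prev => ⟨Classical.choose (hkey (μ + (j + 1)) (by omega) prev.1 prev.2.1),
      (Classical.choose_spec (hkey (μ + (j + 1)) (by omega) prev.1 prev.2.1)).1⟩) j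
  set z : ℕ → K := fun j => (Z j).1 with hz_def
  have hzr : ∀ j, ‖z j‖ < r := fun j => (Z j).2.1
  have hzroot : ∀ j, (T (μ + j)).eval (z j) = 0 := fun j => (Z j).2.2
  have hzstep : ∀ j, ‖z j - z (j + 1)‖ ^ μ * Mr ≤ ‖(T (μ + (j + 1))).eval (z j)‖ * r ^ μ :=
    fun j => (Classical.choose_spec (hkey (μ + (j + 1)) (by omega) (Z j).1 (Z j).2.1)).2
  have hevalsmall : ∀ j, ‖(T (μ + (j + 1))).eval (z j)‖ ≤ Mr * θ ^ (j + 1) := by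
    intro j
    have hTsucc : T (μ + (j + 1)) = T (μ + j) + Polynomial.monomial (μ + j + 1) (c (μ + j + 1)) := by
      simp only [hT_def]
      rw [show μ + (j + 1) + 1 = (μ + j + 1) + 1 by omega, Finset.sum_range_succ]
    rw [hTsucc, Polynomial.eval_add, hzroot j, zero_add, Polynomial.eval_monomial]
    refine le_trans (st3_term_le hr0 (hzr j).le _) ?_
    have h1 := lemB (j + 1)
    rw [show μ + (j + 1) = μ + j + 1 by omega] at h1
    exact h1
  have hdist : ∀ j, dist (z j) (z (j + 1)) ≤ (r * q) * q ^ j := by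
    intro j
    rw [dist_eq_norm]
    have h1 := le_trans (hzstep j)
      (mul_le_mul_of_nonneg_right (hevalsmall j) (by positivity))
    have hrq : (r * q ^ (j + 1)) ^ μ = θ ^ (j + 1) * r ^ μ := by
      rw [mul_pow, ← pow_mul, mul_comm (j + 1) μ, pow_mul, hqμ]
      ring
    have h3 : ‖z j - z (j + 1)‖ ^ μ * Mr ≤ (θ ^ (j + 1) * r ^ μ) * Mr := by
      calc ‖z j - z (j + 1)‖ ^ μ * Mr ≤ Mr * θ ^ (j + 1) * r ^ μ := h1
        _ = (θ ^ (j + 1) * r ^ μ) * Mr := by ring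
    have h2 : ‖z j - z (j + 1)‖ ^ μ ≤ (r * q ^ (j + 1)) ^ μ := by
      rw [hrq]
      exact le_of_mul_le_mul_right h3 hMrpos
    have h4 : ‖z j - z (j + 1)‖ ≤ r * q ^ (j + 1) :=
      (pow_le_pow_iff_left₀ (norm_nonneg _) (by positivity) (by omega)).mp h2
    calc ‖z j - z (j + 1)‖ ≤ r * q ^ (j + 1) := h4
      _ = (r * q) * q ^ j := by rw [pow_succ]; ring
  have hcauchy : CauchySeq z := cauchySeq_of_le_geometric q (r * q) hq1 hdist
  obtain ⟨L, hL⟩ := cauchySeq_tendsto_of_complete hcauchy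
  have hLr : ‖L‖ ≤ r :=
    le_of_tendsto hL.norm (Eventually.of_forall fun j => (hzr j).le)
  have hLδ : ‖L‖ < δ := lt_of_le_of_lt hLr hrδ
  have hsummable : ∀ x : K, ‖x‖ ≤ r → Summable (fun n => c n * x ^ n) := fun x hx =>
    st3_summable_pow hδ hc (le_trans hx hrδ.le)
  have hGz : ∀ j, ‖∑' n, c n * (z j) ^ n‖ ≤ Mr * θ ^ (j + 1) := by
    intro j
    have hsum := hsummable (z j) (hzr j).le
    have hsplit := Summable.sum_add_tsum_nat_add (f := fun n => c n * (z j) ^ n) (μ + j + 1) hsum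
    rw [← hsplit]
    have hhead : ∑ n ∈ Finset.range (μ + j + 1), c n * (z j) ^ n = (T (μ + j)).eval (z j) :=
      (hTeval _ _).symm
    rw [hhead, hzroot j, zero_add]
    refine norm_tsum_le_of_forall_le_of_nonneg (by positivity) fun i => ?_
    refine le_trans (st3_term_le hr0 (hzr j).le _) ?_
    have h1 := lemB (i + (j + 1))
    rw [show μ + (i + (j + 1)) = i + (μ + j + 1) by omega] at h1
    refine le_trans h1 ?_
    refine mul_le_mul_of_nonneg_left ?_ hMrpos.le
    exact pow_le_pow_of_le_one hθ0.le hθ1.le (by omega)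
  have hlip : ∀ x y : K, ‖x‖ ≤ r → ‖y‖ ≤ r →
      ‖(∑' n, c n * x ^ n) - ∑' n, c n * y ^ n‖ ≤ (Mr / r) * ‖x - y‖ := by
    intro x y hx hy
    rw [← Summable.tsum_sub (hsummable x hx) (hsummable y hy)]
    refine norm_tsum_le_of_forall_le_of_nonneg (by positivity) fun n => ?_
    match n with
    | 0 =>
      simp only [pow_zero, mul_one, sub_self, norm_zero]
      positivity
    | (d + 1) =>
      rw [show c (d + 1) * x ^ (d + 1) - c (d + 1) * y ^ (d + 1)
          = c (d + 1) * (x ^ (d + 1) - y ^ (d + 1)) by ring, norm_mul]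
      calc ‖c (d + 1)‖ * ‖x ^ (d + 1) - y ^ (d + 1)‖
          ≤ ‖c (d + 1)‖ * (r ^ d * ‖x - y‖) :=
            mul_le_mul_of_nonneg_left (st3_pow_diff hx hy d) (norm_nonneg _)
        _ = (‖c (d + 1)‖ * r ^ (d + 1)) / r * ‖x - y‖ := by
            rw [pow_succ]
            field_simp
        _ ≤ (Mr / r) * ‖x - y‖ := by
            refine mul_le_mul_of_nonneg_right ?_ (norm_nonneg _)
            have h5 := lemC (d + 1)
            gcongr
  have hGL : (∑' n, c n * L ^ n) = 0 := by
    by_contra hne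
    have hpos : 0 < ‖∑' n, c n * L ^ n‖ := norm_pos_iff.mpr hne
    have h1 : Tendsto (fun j => (Mr / r) * ‖L - z j‖ + Mr * θ ^ (j + 1)) atTop (nhds 0) := by
      have ha : Tendsto (fun j => ‖L - z j‖) atTop (nhds 0) := by
        have hsub := (tendsto_const_nhds (x := L) (f := atTop)).sub hL
        rw [sub_self] at hsub
        have := hsub.norm
        rwa [norm_zero] at this
      have hb : Tendsto (fun j : ℕ => Mr * θ ^ (j + 1)) atTop (nhds 0) := by
        have hgeo : Tendsto (fun j : ℕ => θ ^ j) atTop (nhds 0) :=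
          tendsto_pow_atTop_nhds_zero_of_lt_one hθ0.le hθ1
        have h2 := hgeo.const_mul (Mr * θ)
        rw [mul_zero] at h2
        refine h2.congr fun j => ?_
        rw [pow_succ]
        ring
      have h3 := (ha.const_mul (Mr / r)).add hb
      rw [mul_zero, add_zero] at h3
      exact h3
    obtain ⟨j, hj⟩ := (h1.eventually (eventually_lt_nhds hpos)).exists
    have hbound : ‖∑' n, c n * L ^ n‖ ≤ (Mr / r) * ‖L - z j‖ + Mr * θ ^ (j + 1) := by
      have hGdiff := hlip L (z j) hLr (hzr j).le
      have hdecomp : (∑' n, c n * L ^ n)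
          = ((∑' n, c n * L ^ n) - ∑' n, c n * (z j) ^ n) + ∑' n, c n * (z j) ^ n := by
        ring
      calc ‖∑' n, c n * L ^ n‖
          = ‖((∑' n, c n * L ^ n) - ∑' n, c n * (z j) ^ n) + ∑' n, c n * (z j) ^ n‖ := by
            rw [← hdecomp]
        _ ≤ max ‖(∑' n, c n * L ^ n) - ∑' n, c n * (z j) ^ n‖ ‖∑' n, c n * (z j) ^ n‖ :=
            norm_add_le_max _ _
        _ ≤ (Mr / r) * ‖L - z j‖ + Mr * θ ^ (j + 1) := by
            refine max_le ?_ ?_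
            · refine le_trans hGdiff (le_add_of_nonneg_right ?_)
              positivity
            · refine le_trans (hGz j) (le_add_of_nonneg_left ?_)
              positivity
    exact absurd (lt_of_le_of_lt hbound hj) (lt_irrefl _)
  exact hg L hLδ hGL


end St3Aux

set_option maxHeartbeats 1000000 in
theorem statement3
    -- `Cp` is a model of `ℂ_p`:
    (p : ℕ) [Fact p.Prime] (Cp : Type*) [NontriviallyNormedField Cp]
    [IsUltrametricDist Cp] [CompleteSpace Cp] [IsAlgClosed Cp]
    (hpCp : ‖(p : Cp)‖ = (p : ℝ)⁻¹)
    -- the radius: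
    (δ : ℝ) (hδ : 0 < δ)
    -- `f` is a nonzero function analytic on the closed ball of radius `δ`,
    -- with coefficient sequence `a`:
    (a : ℕ → Cp) (ha : Tendsto (fun n => ‖a n‖ * δ ^ n) atTop (nhds 0))
    (hf0 : ∃ n, a n ≠ 0)
    -- `k` is a positive integer:
    (k : ℕ) (hk : 0 < k)
    -- `f` has at most `k - 1` zeros (with multiplicity) in the open ball
    -- `B(δ)`, in the sense that `f(z) = α·(z - b 1)⋯(z - b m)·g(z)` with
    -- `m ≤ k - 1`, all `b i ∈ B(δ)`, and `g` analytic on the closed ball of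
    -- radius `δ` with no zero in `B(δ)`:
    (m : ℕ) (hm : m ≤ k - 1) (α : Cp) (b : Fin m → Cp) (hb : ∀ i, ‖b i‖ < δ)
    (c : ℕ → Cp) (hc : Tendsto (fun n => ‖c n‖ * δ ^ n) atTop (nhds 0))
    (hg : ∀ z : Cp, ‖z‖ < δ → (∑' n, c n * z ^ n) ≠ 0)
    (hfactor : ∀ z : Cp, ‖z‖ ≤ δ →
      ∑' n, a n * z ^ n = α * (∏ i, (z - b i)) * ∑' n, c n * z ^ n) :
    -- conclusion: `|f|_δ = max_{0 ≤ n ≤ k-1} ‖a n‖ · δ ^ n`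
    gaussNorm a δ = ⨆ n : Fin k, ‖a (n : ℕ)‖ * δ ^ (n : ℕ) := by
  classical
  obtain ⟨Ma, hMa0, hMa⟩ := st3_bound ha
  obtain ⟨Mc, hMc0, hMc⟩ := st3_bound hc
  -- α is nonzero
  have hα : α ≠ 0 := by
    intro h
    have hzero : ∀ n, a n = 0 := fun n => st3_identity hδ hMa0 hMa
      (fun z hz => by rw [hfactor z hz.le, h]; ring) n
    obtain ⟨n, hn⟩ := hf0
    exact hn (hzero n)
  -- the polynomial factor
  set P : Polynomial Cp :=
    Polynomial.C α * ∏ i : Fin m, (Polynomial.X - Polynomial.C (b i)) with hP_def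
  set s : Multiset Cp := Multiset.map b Finset.univ.val with hs_def
  have hsP : P = Polynomial.C α * (s.map fun ρ => Polynomial.X - Polynomial.C ρ).prod := by
    rw [hP_def, hs_def, Multiset.map_map, Finset.prod_eq_multiset_prod]
    rfl
  set q : ℕ → Cp := fun n => P.coeff n with hq_def
  obtain ⟨P1, P2, P3⟩ := st3_poly hδ α hα s
  rw [← hsP] at P1 P2 P3
  set Bq : ℝ := ‖α‖ * (s.map fun ρ => max δ ‖ρ‖).prod with hBq_def
  have hBqpos : 0 < Bq := by
    refine mul_pos (norm_pos_iff.mpr hα) (Multiset.prod_pos ?_)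
    intro x hx
    obtain ⟨ρ, _, rfl⟩ := Multiset.mem_map.mp hx
    exact lt_of_lt_of_le hδ (le_max_left _ _)
  have hcards : (Multiset.card (s.filter fun ρ => ‖ρ‖ < δ)) = m := by
    rw [hs_def]
    rw [Multiset.filter_eq_self.mpr ?_]
    · rw [Multiset.card_map]
      simp
    · intro ρ hρ
      obtain ⟨i, _, rfl⟩ := Multiset.mem_map.mp hρ
      exact hb i
  rw [hcards] at P2 P3
  have hqbound : ∀ n, ‖q n‖ * δ ^ n ≤ Bq := P1
  have hq_at : ‖q m‖ * δ ^ m = Bq := P2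
  have hqne : q m ≠ 0 := by
    intro h
    rw [show q m = P.coeff m from rfl] at h
    rw [show q m = P.coeff m from rfl, h] at hq_at
    simp only [norm_zero, zero_mul] at hq_at
    rw [← hq_at] at hBqpos
    exact lt_irrefl _ hBqpos
  have hqmax : ∀ n, ‖q n‖ * δ ^ n ≤ ‖q m‖ * δ ^ m := fun n => by
    rw [hq_at]; exact P1 n
  have hqstrict : ∀ n < m, ‖q n‖ * δ ^ n < ‖q m‖ * δ ^ m := fun n hn => by
    rw [hq_at]; exact P3 n hn
  -- polynomial evaluation
  have hGpoly : ∀ z : Cp, P.eval z = α * ∏ i, (z - b i) := by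
    intro z
    rw [hP_def, Polynomial.eval_mul, Polynomial.eval_C, Polynomial.eval_prod]
    simp
  -- identity of coefficients
  have hconvbound : ∀ n, ‖st3conv q c n‖ * δ ^ n ≤ Bq * Mc :=
    st3_conv_le hδ hqbound hMc
  have hconv : ∀ n, a n = st3conv q c n := by
    have hMtot : (0:ℝ) < Ma + Bq * Mc := by positivity
    have hbd : ∀ n, ‖a n - st3conv q c n‖ * δ ^ n ≤ Ma + Bq * Mc := by
      intro n
      have h1 : ‖a n - st3conv q c n‖ ≤ max ‖a n‖ ‖st3conv q c n‖ := by
        rw [sub_eq_add_neg]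
        refine le_trans (IsUltrametricDist.norm_add_le_max _ _) ?_
        rw [norm_neg]
      calc ‖a n - st3conv q c n‖ * δ ^ n
          ≤ max ‖a n‖ ‖st3conv q c n‖ * δ ^ n :=
            mul_le_mul_of_nonneg_right h1 (by positivity)
        _ = max (‖a n‖ * δ ^ n) (‖st3conv q c n‖ * δ ^ n) :=
            max_mul_of_nonneg ‖a n‖ ‖st3conv q c n‖ (pow_nonneg hδ.le n)
        _ ≤ Ma + Bq * Mc := by
            refine max_le ?_ ?_
            · refine le_trans (hMa n) (le_add_of_nonneg_right ?_)
              positivity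
            · exact le_trans (hconvbound n) (le_add_of_nonneg_left hMa0.le)
    have hzero : ∀ z : Cp, ‖z‖ < δ → ∑' n, (a n - st3conv q c n) * z ^ n = 0 := by
      intro z hz
      have hsa : Summable (fun n => a n * z ^ n) := st3_summable_of_bound hδ hMa hz
      have hsconv : Summable (fun n => st3conv q c n * z ^ n) :=
        st3_summable_of_bound hδ hconvbound hz
      have hdiff : ∑' n, (a n - st3conv q c n) * z ^ n
          = (∑' n, a n * z ^ n) - ∑' n, st3conv q c n * z ^ n := by
        rw [← Summable.tsum_sub hsa hsconv]
        exact tsum_congr fun n => by ring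
      rw [hdiff, hfactor z hz.le, ← hGpoly z, st3_poly_eval_tsum P z,
        st3_cauchy hδ hqbound hMc hz]
      exact sub_self _
    exact fun n => sub_eq_zero.mp (st3_identity hδ hMtot hbd hzero n)
  -- `c` attains its sup at index 0
  have hc0ne : c 0 ≠ 0 := by
    have h1 := hg 0 (by simpa using hδ)
    intro h
    refine h1 ?_
    rw [tsum_eq_single 0 ?_]
    · rw [h, zero_mul]
    · intro k hk
      rw [zero_pow hk, mul_zero]
  have hcmax : ∀ n, ‖c n‖ * δ ^ n ≤ ‖c 0‖ * δ ^ 0 := fun n => by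
    rw [pow_zero, mul_one]
    exact st3_strassmann hδ hc hg n
  have hcstrict : ∀ n < 0, ‖c n‖ * δ ^ n < ‖c 0‖ * δ ^ 0 := fun n hn =>
    absurd hn (Nat.not_lt_zero n)
  -- main computation
  have ham : ‖a (m + 0)‖ * δ ^ (m + 0) = (‖q m‖ * δ ^ m) * (‖c 0‖ * δ ^ 0) := by
    rw [hconv (m + 0)]
    exact st3_conv_eq hδ hqne hc0ne hqmax hqstrict hcmax hcstrict
  have ham' : ‖a m‖ * δ ^ m = (‖q m‖ * δ ^ m) * (‖c 0‖ * δ ^ 0) := ham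
  have hall : ∀ n, ‖a n‖ * δ ^ n ≤ ‖a m‖ * δ ^ m := by
    intro n
    rw [hconv n, ham']
    exact st3_conv_le hδ hqmax hcmax n
  have hgauss : gaussNorm a δ = ‖a m‖ * δ ^ m := by
    rw [gaussNorm]
    refine le_antisymm (ciSup_le hall) ?_
    refine le_ciSup (f := fun n => ‖a n‖ * δ ^ n) ?_ m
    exact ⟨‖a m‖ * δ ^ m, by rintro x ⟨n, rfl⟩; exact hall n⟩
  have hmk : m < k := by omega
  haveI : Nonempty (Fin k) := ⟨⟨0, hk⟩⟩
  have hfin : (⨆ n : Fin k, ‖a (n : ℕ)‖ * δ ^ (n : ℕ)) = ‖a m‖ * δ ^ m := by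
    refine le_antisymm (ciSup_le fun n => hall n) ?_
    exact le_ciSup (f := fun n : Fin k => ‖a (n : ℕ)‖ * δ ^ (n : ℕ))
      (Set.Finite.bddAbove (Set.finite_range _)) (⟨m, hmk⟩ : Fin k)
  rw [hgauss, hfin]
end
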